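/- Let a, b, c be nonnegative real numbers with a + b + c = 1, and let m, m', m~, m^ : ℕ → ℝ satisfy the Hosoya recurrence system. Set p = 8 + 3a + 5b + 4c, q = 26a − 10b + 8c, σ = √(p² + 4q), and λ = (p + σ)/2. Then the sequence n ↦ m(n)/λⁿ converges, and its limit is (36 − p + σ)/(2σ). (This is the asymptotic behavior of the expected Hosoya index of the random hexagonal cactus R_n(a,b,c): m(n) grows like ((36 − p + σ)/(2σ))·λⁿ.) -/
import Mathlib


/-- Theorem 4 (asymptotics of the expected Hosoya index of random hexagonal cacti):
m(n)/λⁿ converges to (36 - p + σ)/(2σ). -/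
theorem hosoya_asymptotics (a b c : ℝ) (ha : 0 ≤ a) (hb : 0 ≤ b) (hc : 0 ≤ c)
    (habc : a + b + c = 1)
(m m' mt mh : ℕ → ℝ)
    (hm0 : m 0 = 1) (hm1 : m 1 = 18)
    (hm'0 : m' 0 = 8) (hmt0 : mt 0 = 8) (hmh0 : mh 0 = 8)
    (hm : ∀ n, 2 ≤ n →
      m n = 8 * m (n - 1) + 10 * a * m' (n - 2) + 10 * b * mt (n - 2) + 10 * c * mh (n - 2))
    (hm' : ∀ n, 1 ≤ n →
      m' n = 5 * m n + 3 * a * m' (n - 1) + 3 * b * mt (n - 1) + 3 * c * mh (n - 1))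
    (hmt : ∀ n, 1 ≤ n →
      mt n = 3 * m n + 5 * a * m' (n - 1) + 5 * b * mt (n - 1) + 5 * c * mh (n - 1))
    (hmh : ∀ n, 1 ≤ n →
      mh n = 4 * m n + 4 * a * m' (n - 1) + 4 * b * mt (n - 1) + 4 * c * mh (n - 1))
    (p q σ lam : ℝ)
    (hp : p = 8 + 3 * a + 5 * b + 4 * c)
    (hq : q = 26 * a - 10 * b + 8 * c)
    (hσ : σ = Real.sqrt (p ^ 2 + 4 * q))
    (hlam : lam = (p + σ) / 2) :
    Filter.Tendsto (fun n : ℕ => m n / lam ^ n) Filter.atTop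
      (nhds ((36 - p + σ) / (2 * σ))) := by
  -- discriminant positive
  have hΔ : 0 < p ^ 2 + 4 * q := by
    rw [hp, hq]; nlinarith [sq_nonneg (a - b), sq_nonneg (a + b + c)]
  have hσpos : 0 < σ := by rw [hσ]; exact Real.sqrt_pos.mpr hΔ
  have hσsq : σ ^ 2 = p ^ 2 + 4 * q := by rw [hσ]; exact Real.sq_sqrt hΔ.le
  have hppos : 0 < p := by rw [hp]; linarith
  have hlampos : 0 < lam := by rw [hlam]; linarith
  obtain ⟨μ, hμ⟩ : ∃ x : ℝ, x = (p - σ) / 2 := ⟨_, rfl⟩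
  have hlam2 : lam ^ 2 = p * lam + q := by rw [hlam]; linear_combination hσsq / 4
  have hmu2 : μ ^ 2 = p * μ + q := by rw [hμ]; linear_combination hσsq / 4
  -- auxiliary sequence
  obtain ⟨s, hsdef⟩ : ∃ s : ℕ → ℝ, ∀ n, s n = a * m' n + b * mt n + c * mh n :=
    ⟨_, fun _ => rfl⟩
  have hs : ∀ n : ℕ, s (n + 1)
      = (5 * a + 3 * b + 4 * c) * m (n + 1) + (3 * a + 5 * b + 4 * c) * s n := by
    intro n
    have h1 := hm' (n + 1) (by omega)
    have h2 := hmt (n + 1) (by omega)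
    have h3 := hmh (n + 1) (by omega)
    simp only [Nat.add_sub_cancel] at h1 h2 h3
    rw [hsdef (n + 1), hsdef n, h1, h2, h3]; ring
  have hM : ∀ n : ℕ, m (n + 2) = 8 * m (n + 1) + 10 * s n := by
    intro n
    have h := hm (n + 2) (by omega)
    have e1 : n + 2 - 1 = n + 1 := by omega
    have e2 : n + 2 - 2 = n := by omega
    rw [e1, e2] at h
    rw [h, hsdef n]; ring
  have hs0 : s 0 = 8 := by rw [hsdef 0, hm'0, hmt0, hmh0]; linarith
  -- second order recurrence for m
  have hrec : ∀ n : ℕ, m (n + 2) = p * m (n + 1) + q * m n := by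
    intro n
    cases n with
    | zero =>
      rw [hM 0, hs0, hm0, hm1, hp, hq]; linarith
    | succ k =>
      have h1 := hM (k + 1)
      have h2 := hM k
      have h3 := hs k
      rw [hp, hq]
      linear_combination h1 + 10 * h3 - (3 * a + 5 * b + 4 * c) * h2
  obtain ⟨A, hA⟩ : ∃ x : ℝ, x = (36 - p + σ) / (2 * σ) := ⟨_, rfl⟩
  obtain ⟨B, hB⟩ : ∃ x : ℝ, x = (p - 36 + σ) / (2 * σ) := ⟨_, rfl⟩
  have hσne : σ ≠ 0 := ne_of_gt hσpos
  have key : ∀ n : ℕ, m n = A * lam ^ n + B * μ ^ n := by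
    have key2 : ∀ n : ℕ, m n = A * lam ^ n + B * μ ^ n
        ∧ m (n + 1) = A * lam ^ (n + 1) + B * μ ^ (n + 1) := by
      intro n
      induction n with
      | zero =>
        constructor
        · rw [hm0, hA, hB]; field_simp; ring
        · rw [hm1, hA, hB, hlam, hμ]; field_simp; ring
      | succ k ih =>
        refine ⟨ih.2, ?_⟩
        rw [hrec k, ih.1, ih.2]
        linear_combination (-(A * lam ^ k)) * hlam2 - (B * μ ^ k) * hmu2
    exact fun n => (key2 n).1
  have hlamne : lam ≠ 0 := ne_of_gt hlampos
  have hratio : |μ / lam| < 1 := by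
    rw [abs_div, abs_of_pos hlampos, div_lt_one hlampos]
    exact abs_lt.mpr ⟨by rw [hμ]; linarith, by rw [hμ, hlam]; linarith⟩
  have h0 : Filter.Tendsto (fun n : ℕ => (μ / lam) ^ n) Filter.atTop (nhds 0) :=
    tendsto_pow_atTop_nhds_zero_of_abs_lt_one hratio
  have h1 : Filter.Tendsto (fun n : ℕ => A + B * (μ / lam) ^ n) Filter.atTop (nhds A) := by
    have := Filter.Tendsto.const_add A (Filter.Tendsto.const_mul B h0)
    simpa using this
  have heq : (fun n : ℕ => m n / lam ^ n) = fun n : ℕ => A + B * (μ / lam) ^ n := by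
    funext n
    rw [key n, div_pow]
    field_simp
  rw [heq, ← hA]
  exact h1
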